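/- (Global stability of the disease-free equilibrium G₂.) Let (S, I₁, I₂, I₁₂, R) be a solution of the coinfection model with all components nonnegative and S(0) > 0. Assume μ₀ < μ₄' < μⱼ' for j = 1,2,3 and S** < min{ (μ₁'−μ₀)/α₁, (μ₂'−μ₀)/α₂, (μ₃'−μ₀)/α̂₃ }, where α̂₃ = β₁+β₂+α₃. Then lim_{t→∞} I₁(t) = lim_{t→∞} I₂(t) = lim_{t→∞} I₁₂(t) = lim_{t→∞} R(t) = 0 and lim_{t→∞} S(t) = S**. -/

import Mathlib

open Filter Topology Set
set_option maxHeartbeats 1000000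

-- AUX (already verified) --
lemma mono_aux {D : Set ℝ} (hD : Convex ℝ D) (f f' : ℝ → ℝ)
    (hd : ∀ t ∈ D, HasDerivAt f (f' t) t) (h0 : ∀ t ∈ D, 0 ≤ f' t) :
    MonotoneOn f D := by
  apply monotoneOn_of_deriv_nonneg hD
  · exact fun t ht => (hd t ht).continuousAt.continuousWithinAt
  · exact fun t ht => ((hd t (interior_subset ht)).differentiableAt).differentiableWithinAt
  · intro t ht
    rw [(hd t (interior_subset ht)).deriv]
    exact h0 t (interior_subset ht)

lemma barrier_up (f f' : ℝ → ℝ) (t₀ c δ : ℝ) (hδ : 0 < δ)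
    (hd : ∀ t ≥ t₀, HasDerivAt f (f' t) t)
    (hgrow : ∀ t ≥ t₀, f t ≤ c → δ ≤ f' t) :
    ∀ᶠ t in atTop, c ≤ f t := by
  -- first: there is a point with c ≤ f
  have key : ∀ a ≥ t₀, ∀ b, a ≤ b → c ≤ f a → c ≤ f b := by
    intro a ha b hab hfa
    by_contra hfb
    push_neg at hfb
    set Z : Set ℝ := {u ∈ Icc a b | c ≤ f u} with hZ
    have hZne : Z.Nonempty := ⟨a, ⟨le_refl a, hab⟩, hfa⟩
    have hZcl : IsClosed Z := by
      have hcont : ContinuousOn f (Icc a b) := fun t ht =>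
        (hd t (le_trans ha ht.1)).continuousAt.continuousWithinAt
      have : Z = Icc a b ∩ f ⁻¹' (Ici c) := by
        ext u; constructor
        · rintro ⟨h1, h2⟩; exact ⟨h1, h2⟩
        · rintro ⟨h1, h2⟩; exact ⟨h1, h2⟩
      rw [this]
      exact hcont.preimage_isClosed_of_isClosed isClosed_Icc isClosed_Ici
    have hZbdd : BddAbove Z := ⟨b, fun u hu => hu.1.2⟩
    set s := sSup Z with hs
    have hsZ : s ∈ Z := hZcl.csSup_mem hZne hZbdd
    have hsb : s ≤ b := hsZ.1.2
    have hsa : a ≤ s := hsZ.1.1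
    have hsne : s ≠ b := fun h => absurd hsZ.2 (by rw [h]; exact not_le.2 hfb)
    have hslt : s < b := lt_of_le_of_ne hsb hsne
    -- on (s, b], f < c
    have hlt : ∀ u, s < u → u ≤ b → f u < c := by
      intro u hsu hub
      by_contra h
      push_neg at h
      exact absurd (le_csSup hZbdd (show u ∈ Z from ⟨⟨le_trans hsa hsu.le, hub⟩, h⟩)) (not_le.2 hsu)
    -- f s ≤ c
    have hfs : f s ≤ c := by
      have hco : ContinuousAt f s := (hd s (le_trans ha hsa)).continuousAt
      have htd : Filter.Tendsto f (nhdsWithin s (Ioi s)) (nhds (f s)) :=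
        hco.continuousWithinAt.tendsto
      refine le_of_tendsto htd ?_
      filter_upwards [Ioc_mem_nhdsGT hslt] with u hu
      exact (hlt u hu.1 hu.2).le
    -- f ≤ c on Icc s b, so f' ≥ δ there, so f monotone there
    have hle : ∀ u ∈ Icc s b, f u ≤ c := by
      intro u hu
      rcases eq_or_lt_of_le hu.1 with h | h
      · rwa [← h]
      · exact (hlt u h hu.2).le
    have hmono : MonotoneOn f (Icc s b) :=
      mono_aux (convex_Icc s b) f f' (fun t ht => hd t (le_trans ha (le_trans hsa ht.1)))
        (fun t ht => le_trans hδ.le (hgrow t (le_trans ha (le_trans hsa ht.1)) (hle t ht)))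
    have : f s ≤ f b := hmono ⟨le_refl s, hsb⟩ ⟨hsb, le_refl b⟩ hsb
    have hfsc : c ≤ f s := hsZ.2
    linarith [hlt b hslt (le_refl b)]
  -- existence of a point where c ≤ f
  have hex : ∃ a ≥ t₀, c ≤ f a := by
    by_contra h
    push_neg at h
    have hgrow' : ∀ t ≥ t₀, δ ≤ f' t := fun t ht => hgrow t ht (h t ht).le
    set g : ℝ → ℝ := fun t => f t - δ * t with hg
    have hmono : MonotoneOn g (Ici t₀) := by
      apply mono_aux (convex_Ici t₀) g (fun t => f' t - δ)
      · intro t ht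
        exact ((hd t ht).sub ((hasDerivAt_id t).const_mul δ)).congr_deriv (by ring)
      · intro t ht; linarith [hgrow' t ht]
    set T := t₀ + (c - f t₀) / δ + 1 with hT
    have hd0 : 0 ≤ (c - f t₀) / δ := div_nonneg (by linarith [h t₀ (le_refl t₀)]) hδ.le
    have hT0 : t₀ ≤ T := by rw [hT]; linarith
    have := hmono (self_mem_Ici) (show T ∈ Ici t₀ from hT0) hT0
    have hfT : f T < c := h T hT0
    rw [hg] at this
    simp only at this
    have : f t₀ - δ * t₀ ≤ f T - δ * T := this
    have hδT : δ * T = δ * t₀ + (c - f t₀) + δ := by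
      have hδc : δ * ((c - f t₀) / δ) = c - f t₀ := by field_simp
      rw [hT]; linear_combination hδc
    linarith
  obtain ⟨a, ha, hfa⟩ := hex
  rw [eventually_atTop]
  exact ⟨a, fun b hb => key a ha b hb hfa⟩

lemma decay_aux (L L' : ℝ → ℝ) (t₀ δ : ℝ) (hδ : 0 < δ)
    (hd : ∀ t ≥ t₀, HasDerivAt L (L' t) t)
    (hineq : ∀ t ≥ t₀, L' t ≤ -δ * L t)
    (hpos : ∀ t ≥ t₀, 0 ≤ L t) :
    Tendsto L atTop (𝓝 0) := by
  set g : ℝ → ℝ := fun t => L t * Real.exp (δ * t) with hg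
  have hgmono : MonotoneOn (fun t => -g t) (Set.Ici t₀) := by
    apply mono_aux (convex_Ici t₀) _ (fun t => -((L' t + δ * L t) * Real.exp (δ * t)))
    · intro t ht
      have h1 : HasDerivAt (fun t => Real.exp (δ * t)) (δ * Real.exp (δ * t)) t := by
        exact ((hasDerivAt_id' (x := t)).const_mul δ).exp.congr_deriv (by ring)
      exact (((hd t ht).mul h1).neg).congr_deriv (by ring)
    · intro t ht
      have h1 := hineq t ht
      have h2 := Real.exp_pos (δ * t)
      nlinarith
  have hbound : ∀ t ≥ t₀, L t ≤ g t₀ * Real.exp (-(δ * t)) := by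
    intro t ht
    have h1 := hgmono (Set.self_mem_Ici) (show t ∈ Set.Ici t₀ from ht) ht
    simp only [neg_le_neg_iff] at h1
    have h3 : L t * Real.exp (δ * t) ≤ g t₀ := h1
    have h4 := Real.exp_pos (δ * t)
    rw [Real.exp_neg, ← div_eq_mul_inv, le_div_iff₀ h4]
    exact h3
  have hexp : Tendsto (fun t => g t₀ * Real.exp (-(δ * t))) atTop (𝓝 0) := by
    have h1 : Tendsto (fun t : ℝ => -(δ * t)) atTop atBot := by
      apply tendsto_neg_atBot_iff.2
      exact Tendsto.const_mul_atTop hδ tendsto_id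
    have := Real.tendsto_exp_atBot.comp h1
    simpa using this.const_mul (g t₀)
  apply tendsto_of_tendsto_of_tendsto_of_le_of_le' tendsto_const_nhds hexp
  · filter_upwards [eventually_ge_atTop t₀] with t ht using hpos t ht
  · filter_upwards [eventually_ge_atTop t₀] with t ht using hbound t ht

theorem stmt_19
    (b K α1 α2 α3 β1 β2 γ1 γ2 η1 η2 ρ1 ρ2 ρ3 μ0 μ1' μ2' μ3' μ4' : ℝ)
    (hb : 0 < b) (hK : 0 < K) (hα1 : 0 < α1) (hα2 : 0 < α2) (hα3 : 0 < α3)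
    (hβ1 : 0 < β1) (hβ2 : 0 < β2) (hγ1 : 0 < γ1) (hγ2 : 0 < γ2)
    (hη1 : 0 < η1) (hη2 : 0 < η2) (hρ1 : 0 < ρ1) (hρ2 : 0 < ρ2) (hρ3 : 0 < ρ3)
    (hμ0 : 0 < μ0) (hμ1' : 0 < μ1') (hμ2' : 0 < μ2') (hμ3' : 0 < μ3') (hμ4' : 0 < μ4')
    (hbμ0 : μ0 < b)
    (hμ04 : μ0 < μ4') (hμ41 : μ4' < μ1') (hμ42 : μ4' < μ2') (hμ43 : μ4' < μ3')
    (μ1 μ2 μ3 : ℝ) (hμ1 : μ1 = ρ1 + μ1') (hμ2 : μ2 = ρ2 + μ2') (hμ3 : μ3 = ρ3 + μ3')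
    (S I1 I2 I12 R N : ℝ → ℝ)
    (hN : ∀ t, N t = S t + I1 t + I2 t + I12 t + R t)
    (hS : ∀ t ≥ (0:ℝ), HasDerivAt S
      ((b * (1 - N t / K) - α1 * I1 t - α2 * I2 t - (β1 + β2 + α3) * I12 t - μ0) * S t) t)
    (hI1 : ∀ t ≥ (0:ℝ), HasDerivAt I1
      ((b * (1 - N t / K) + α1 * S t - η1 * I12 t - γ1 * I2 t - μ1) * I1 t
        + β1 * S t * I12 t) t)
    (hI2 : ∀ t ≥ (0:ℝ), HasDerivAt I2
      ((b * (1 - N t / K) + α2 * S t - η2 * I12 t - γ2 * I1 t - μ2) * I2 t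
        + β2 * S t * I12 t) t)
    (hI12 : ∀ t ≥ (0:ℝ), HasDerivAt I12
      ((b * (1 - N t / K) + α3 * S t + η1 * I1 t + η2 * I2 t - μ3) * I12 t
        + (γ1 + γ2) * I1 t * I2 t) t)
    (hR : ∀ t ≥ (0:ℝ), HasDerivAt R
      ((b * (1 - N t / K) - μ4') * R t + ρ1 * I1 t + ρ2 * I2 t + ρ3 * I12 t) t)
    (hnonneg : ∀ t ≥ (0:ℝ), 0 ≤ S t ∧ 0 ≤ I1 t ∧ 0 ≤ I2 t ∧ 0 ≤ I12 t ∧ 0 ≤ R t)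
    (hS0 : 0 < S 0)
    (Sss : ℝ) (hSss : Sss = K * (b - μ0) / b)
    (hsmall : Sss < min ((μ1' - μ0) / α1) (min ((μ2' - μ0) / α2)
        ((μ3' - μ0) / (β1 + β2 + α3)))) :
    Tendsto I1 atTop (𝓝 0) ∧ Tendsto I2 atTop (𝓝 0) ∧ Tendsto I12 atTop (𝓝 0)
      ∧ Tendsto R atTop (𝓝 0) ∧ Tendsto S atTop (𝓝 Sss) := by
  have hα3' : 0 < β1 + β2 + α3 := by linarith
  have hSsspos : 0 < Sss := by
    rw [hSss]; exact div_pos (mul_pos hK (by linarith)) hb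
  have hsmall1 : α1 * Sss < μ1' - μ0 := by
    have h := lt_of_lt_of_le hsmall (min_le_left _ _)
    rw [lt_div_iff₀ hα1] at h; linarith [h]
  have hsmall2 : α2 * Sss < μ2' - μ0 := by
    have h := lt_of_lt_of_le hsmall (le_trans (min_le_right _ _) (min_le_left _ _))
    rw [lt_div_iff₀ hα2] at h; linarith [h]
  have hsmall3 : (β1 + β2 + α3) * Sss < μ3' - μ0 := by
    have h := lt_of_lt_of_le hsmall (le_trans (min_le_right _ _) (min_le_right _ _))
    rw [lt_div_iff₀ hα3'] at h; linarith [h]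
  -- derivative of N (in simplified closed form)
  have hN' : ∀ t ≥ (0:ℝ), HasDerivAt N (b * (1 - N t / K) * N t - μ0 * S t - μ1' * I1 t
      - μ2' * I2 t - μ3' * I12 t - μ4' * R t) t := by
    intro t ht
    have hNe : N = fun u => S u + I1 u + I2 u + I12 u + R u := funext hN
    have h := (((((hS t ht).add (hI1 t ht)).add (hI2 t ht)).add (hI12 t ht)).add (hR t ht))
    have h2 := h.congr_deriv (show _ = b * (1 - N t / K) * N t - μ0 * S t - μ1' * I1 t
      - μ2' * I2 t - μ3' * I12 t - μ4' * R t by rw [hμ1, hμ2, hμ3, hN t]; ring)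
    have hNe2 : N = S + I1 + I2 + I12 + R := hNe
    rw [← hNe2] at h2
    exact h2
  -- positivity of S
  have hSpos : ∀ t ≥ (0:ℝ), 0 < S t := by
    intro T hT
    set φ : ℝ → ℝ := fun t =>
      b * (1 - N t / K) - α1 * I1 t - α2 * I2 t - (β1 + β2 + α3) * I12 t - μ0 with hφdef
    have hφc : ContinuousOn φ (Icc 0 T) := by
      intro t ht
      have h1 := (hN' t ht.1).continuousAt
      have h2 := (hI1 t ht.1).continuousAt
      have h3 := (hI2 t ht.1).continuousAt
      have h4 := (hI12 t ht.1).continuousAt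
      have hca : ContinuousAt φ t := by
        rw [hφdef]; fun_prop
      exact hca.continuousWithinAt
    obtain ⟨C, hC⟩ := (isCompact_Icc).exists_bound_of_continuousOn hφc
    set g : ℝ → ℝ := fun t => S t * Real.exp (C * t) with hgdef
    have hgmono : MonotoneOn g (Icc 0 T) := by
      apply mono_aux (convex_Icc 0 T) g (fun t => (φ t + C) * S t * Real.exp (C * t))
      · intro t ht
        have he : HasDerivAt (fun u => Real.exp (C * u)) (C * Real.exp (C * t)) t := by
          exact ((hasDerivAt_id' (x := t)).const_mul C).exp.congr_deriv (by ring)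
        exact ((hS t ht.1).mul he).congr_deriv (by rw [hφdef]; ring)
      · intro t ht
        have h1 := hC t ht
        have h2 : -C ≤ φ t := by
          have h2' := abs_le.1 (by simpa [Real.norm_eq_abs] using h1)
          exact h2'.1
        have h3 := (hnonneg t ht.1).1
        have h4 := (Real.exp_pos (C * t)).le
        have h5 : 0 ≤ φ t + C := by linarith
        positivity
    have := hgmono (Set.mem_Icc.2 ⟨le_refl 0, hT⟩) (Set.mem_Icc.2 ⟨hT, le_refl T⟩) hT
    have hg0 : g 0 = S 0 := by simp [hgdef]
    have hgT : g T = S T * Real.exp (C * T) := rfl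
    have h6 : 0 < S T * Real.exp (C * T) := by
      rw [← hgT]; rw [hg0] at this; linarith
    have h7 := Real.exp_pos (C * T)
    by_contra hcon
    push_neg at hcon
    have := mul_nonpos_of_nonpos_of_nonneg hcon h7.le
    linarith only [h6, this]
  -- eventual bound on N
  have evN : ∀ ε > (0:ℝ), ∀ᶠ t in atTop, N t ≤ Sss + ε := by
    intro ε hε
    have hδN : 0 < b / K * (Sss + ε) * ε := by positivity
    have hbar := barrier_up (fun t => -(N t)) (fun t => -(b * (1 - N t / K) * N t - μ0 * S t
        - μ1' * I1 t - μ2' * I2 t - μ3' * I12 t - μ4' * R t)) 0 (-(Sss + ε))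
      (b / K * (Sss + ε) * ε) hδN (fun t ht => (hN' t ht).neg) ?_
    · filter_upwards [hbar] with t ht
      have ht' : -(Sss + ε) ≤ -(N t) := ht
      linarith
    · intro t ht hle
      have hle' : -(N t) ≤ -(Sss + ε) := hle
      have hNt : Sss + ε ≤ N t := by linarith
      obtain ⟨h1, h2, h3, h4, h5⟩ := hnonneg t ht
      have hNe := hN t
      have hNnn : 0 ≤ N t := by rw [hNe]; linarith
      show b / K * (Sss + ε) * ε ≤ -(b * (1 - N t / K) * N t - μ0 * S t
        - μ1' * I1 t - μ2' * I2 t - μ3' * I12 t - μ4' * R t)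
      have k0 : μ0 * N t = μ0 * S t + μ0 * I1 t + μ0 * I2 t + μ0 * I12 t + μ0 * R t := by
        rw [hNe]; ring
      have k1 : μ0 * I1 t ≤ μ1' * I1 t := mul_le_mul_of_nonneg_right (by linarith) h2
      have k2 : μ0 * I2 t ≤ μ2' * I2 t := mul_le_mul_of_nonneg_right (by linarith) h3
      have k3 : μ0 * I12 t ≤ μ3' * I12 t := mul_le_mul_of_nonneg_right (by linarith) h4
      have k4 : μ0 * R t ≤ μ4' * R t := mul_le_mul_of_nonneg_right (by linarith) h5
      have e2 : b * (1 - N t / K) * N t - μ0 * S t - μ1' * I1 t - μ2' * I2 t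
          - μ3' * I12 t - μ4' * R t ≤ b * (1 - N t / K) * N t - μ0 * N t := by
        linarith
      have e3 : b * (1 - N t / K) * N t - μ0 * N t = b / K * N t * (Sss - N t) := by
        rw [hSss]; field_simp; ring
      have e4 : b / K * N t * (Sss - N t) ≤ -(b / K * (Sss + ε) * ε) := by
        have hbK : 0 < b / K := div_pos hb hK
        have m1 : Sss - N t ≤ -ε := by linarith only [hNt]
        have m2 : b / K * N t * (Sss - N t) ≤ b / K * (Sss + ε) * (Sss - N t) := by
          apply mul_le_mul_of_nonpos_right _ (by linarith only [hNt, hε] : Sss - N t ≤ 0)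
          exact mul_le_mul_of_nonneg_left hNt hbK.le
        have m3 : b / K * (Sss + ε) * (Sss - N t) ≤ b / K * (Sss + ε) * (-ε) :=
          mul_le_mul_of_nonneg_left m1 (by positivity)
        have m4 : b / K * (Sss + ε) * (-ε) = -(b / K * (Sss + ε) * ε) := by ring
        linarith only [m2, m3, m4]
      linarith
  -- decay of infected + recovered
  set W : ℝ → ℝ := fun t => I1 t + I2 t + I12 t + R t with hWdef
  have hWto0 : Tendsto W atTop (𝓝 0) := by
    have hc1 : 0 < μ1' - μ0 - α1 * Sss := by linarith
    have hc2 : 0 < μ2' - μ0 - α2 * Sss := by linarith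
    have hc3 : 0 < μ3' - μ0 - (β1 + β2 + α3) * Sss := by linarith
    set εw : ℝ := min ((μ1' - μ0 - α1 * Sss) / (2 * α1))
      (min ((μ2' - μ0 - α2 * Sss) / (2 * α2))
        ((μ3' - μ0 - (β1 + β2 + α3) * Sss) / (2 * (β1 + β2 + α3)))) with hεwdef
    have hεw : 0 < εw :=
      lt_min (by positivity) (lt_min (by positivity) (by positivity))
    set δw : ℝ := min (min ((μ1' - μ0 - α1 * Sss) / 2) ((μ2' - μ0 - α2 * Sss) / 2))
      (min ((μ3' - μ0 - (β1 + β2 + α3) * Sss) / 2) (μ4' - μ0)) with hδwdef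
    have hδw : 0 < δw :=
      lt_min (lt_min (by positivity) (by positivity)) (lt_min (by positivity) (by linarith))
    obtain ⟨t₀, ht₀⟩ := eventually_atTop.1 ((evN εw hεw).and (eventually_ge_atTop (0:ℝ)))
    -- derivative bounds on the quotient Lyapunov function  W/S
    have hεw1 : εw ≤ (μ1' - μ0 - α1 * Sss) / (2 * α1) := min_le_left _ _
    have hεw2 : εw ≤ (μ2' - μ0 - α2 * Sss) / (2 * α2) :=
      le_trans (min_le_right _ _) (min_le_left _ _)
    have hεw3 : εw ≤ (μ3' - μ0 - (β1 + β2 + α3) * Sss) / (2 * (β1 + β2 + α3)) :=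
      le_trans (min_le_right _ _) (min_le_right _ _)
    have hδw1 : δw ≤ (μ1' - μ0 - α1 * Sss) / 2 := le_trans (min_le_left _ _) (min_le_left _ _)
    have hδw2 : δw ≤ (μ2' - μ0 - α2 * Sss) / 2 := le_trans (min_le_left _ _) (min_le_right _ _)
    have hδw3 : δw ≤ (μ3' - μ0 - (β1 + β2 + α3) * Sss) / 2 :=
      le_trans (min_le_right _ _) (min_le_left _ _)
    have hδw4 : δw ≤ μ4' - μ0 := le_trans (min_le_right _ _) (min_le_right _ _)
    have q1 : μ0 - μ1' + α1 * (Sss + εw) ≤ -δw := by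
      rw [le_div_iff₀ (by positivity : (0:ℝ) < 2 * α1)] at hεw1
      nlinarith [hεw1, hδw1]
    have q2 : μ0 - μ2' + α2 * (Sss + εw) ≤ -δw := by
      rw [le_div_iff₀ (by positivity : (0:ℝ) < 2 * α2)] at hεw2
      nlinarith [hεw2, hδw2]
    have q3 : μ0 - μ3' + (β1 + β2 + α3) * (Sss + εw) ≤ -δw := by
      rw [le_div_iff₀ (by positivity : (0:ℝ) < 2 * (β1 + β2 + α3))] at hεw3
      nlinarith [hεw3, hδw3]
    have q4 : μ0 - μ4' ≤ -δw := by linarith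
    -- the Lyapunov estimate
    have key : ∀ t ≥ t₀, ((((b * (1 - N t / K) + α1 * S t - η1 * I12 t - γ1 * I2 t - μ1) * I1 t
        + β1 * S t * I12 t)
        + ((b * (1 - N t / K) + α2 * S t - η2 * I12 t - γ2 * I1 t - μ2) * I2 t
        + β2 * S t * I12 t)
        + ((b * (1 - N t / K) + α3 * S t + η1 * I1 t + η2 * I2 t - μ3) * I12 t
        + (γ1 + γ2) * I1 t * I2 t)
        + ((b * (1 - N t / K) - μ4') * R t + ρ1 * I1 t + ρ2 * I2 t + ρ3 * I12 t)) * S t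
        - W t * ((b * (1 - N t / K) - α1 * I1 t - α2 * I2 t - (β1 + β2 + α3) * I12 t - μ0) * S t))
        / (S t) ^ 2 ≤ -δw * (W t / S t) := by
      intro t ht
      have ht0 : (0:ℝ) ≤ t := (ht₀ t ht).2
      have hNle : N t ≤ Sss + εw := (ht₀ t ht).1
      have hSp := hSpos t ht0
      obtain ⟨h1, h2, h3, h4, h5⟩ := hnonneg t ht0
      have hAnn : 0 ≤ α1 * I1 t + α2 * I2 t + (β1 + β2 + α3) * I12 t := by positivity
      have id1 : (((b * (1 - N t / K) + α1 * S t - η1 * I12 t - γ1 * I2 t - μ1) * I1 t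
          + β1 * S t * I12 t)
          + ((b * (1 - N t / K) + α2 * S t - η2 * I12 t - γ2 * I1 t - μ2) * I2 t
          + β2 * S t * I12 t)
          + ((b * (1 - N t / K) + α3 * S t + η1 * I1 t + η2 * I2 t - μ3) * I12 t
          + (γ1 + γ2) * I1 t * I2 t)
          + ((b * (1 - N t / K) - μ4') * R t + ρ1 * I1 t + ρ2 * I2 t + ρ3 * I12 t)) * S t
          - W t * ((b * (1 - N t / K) - α1 * I1 t - α2 * I2 t - (β1 + β2 + α3) * I12 t - μ0) * S t)
          = S t * ((μ0 - μ1') * I1 t + (μ0 - μ2') * I2 t + (μ0 - μ3') * I12 t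
            + (μ0 - μ4') * R t
            + (α1 * I1 t + α2 * I2 t + (β1 + β2 + α3) * I12 t) * N t) := by
        rw [hμ1, hμ2, hμ3, hWdef]
        simp only
        rw [hN t]
        ring
      have bound1 : (α1 * I1 t + α2 * I2 t + (β1 + β2 + α3) * I12 t) * N t
          ≤ (α1 * I1 t + α2 * I2 t + (β1 + β2 + α3) * I12 t) * (Sss + εw) :=
        mul_le_mul_of_nonneg_left hNle hAnn
      have p1 : (μ0 - μ1' + α1 * (Sss + εw)) * I1 t ≤ -δw * I1 t :=
        mul_le_mul_of_nonneg_right q1 h2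
      have p2 : (μ0 - μ2' + α2 * (Sss + εw)) * I2 t ≤ -δw * I2 t :=
        mul_le_mul_of_nonneg_right q2 h3
      have p3 : (μ0 - μ3' + (β1 + β2 + α3) * (Sss + εw)) * I12 t ≤ -δw * I12 t :=
        mul_le_mul_of_nonneg_right q3 h4
      have p4 : (μ0 - μ4') * R t ≤ -δw * R t := mul_le_mul_of_nonneg_right q4 h5
      have inner : (μ0 - μ1') * I1 t + (μ0 - μ2') * I2 t + (μ0 - μ3') * I12 t
          + (μ0 - μ4') * R t
          + (α1 * I1 t + α2 * I2 t + (β1 + β2 + α3) * I12 t) * N t ≤ -δw * W t := by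
        simp only [hWdef]
        linarith only [bound1, p1, p2, p3, p4]
      have hfinal : S t * ((μ0 - μ1') * I1 t + (μ0 - μ2') * I2 t + (μ0 - μ3') * I12 t
          + (μ0 - μ4') * R t
          + (α1 * I1 t + α2 * I2 t + (β1 + β2 + α3) * I12 t) * N t)
          ≤ S t * (-δw * W t) := mul_le_mul_of_nonneg_left inner hSp.le
      rw [id1]
      have hpow : (0:ℝ) < (S t) ^ 2 := by positivity
      have heq : S t * (-δw * W t) / (S t) ^ 2 = -δw * (W t / S t) := by
        field_simp
      rw [← heq]
      exact (div_le_div_iff_of_pos_right hpow).2 hfinal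
    have hLd : ∀ t ≥ t₀, HasDerivAt (fun u => W u / S u)
        (((((b * (1 - N t / K) + α1 * S t - η1 * I12 t - γ1 * I2 t - μ1) * I1 t
        + β1 * S t * I12 t)
        + ((b * (1 - N t / K) + α2 * S t - η2 * I12 t - γ2 * I1 t - μ2) * I2 t
        + β2 * S t * I12 t)
        + ((b * (1 - N t / K) + α3 * S t + η1 * I1 t + η2 * I2 t - μ3) * I12 t
        + (γ1 + γ2) * I1 t * I2 t)
        + ((b * (1 - N t / K) - μ4') * R t + ρ1 * I1 t + ρ2 * I2 t + ρ3 * I12 t)) * S t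
        - W t * ((b * (1 - N t / K) - α1 * I1 t - α2 * I2 t - (β1 + β2 + α3) * I12 t - μ0) * S t))
        / (S t) ^ 2) t := by
      intro t ht
      have ht0 : (0:ℝ) ≤ t := (ht₀ t ht).2
      have hW' : HasDerivAt W ((((b * (1 - N t / K) + α1 * S t - η1 * I12 t - γ1 * I2 t - μ1) * I1 t
        + β1 * S t * I12 t)
        + ((b * (1 - N t / K) + α2 * S t - η2 * I12 t - γ2 * I1 t - μ2) * I2 t
        + β2 * S t * I12 t)
        + ((b * (1 - N t / K) + α3 * S t + η1 * I1 t + η2 * I2 t - μ3) * I12 t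
        + (γ1 + γ2) * I1 t * I2 t)
        + ((b * (1 - N t / K) - μ4') * R t + ρ1 * I1 t + ρ2 * I2 t + ρ3 * I12 t))) t :=
        (((hI1 t ht0).add (hI2 t ht0)).add (hI12 t ht0)).add (hR t ht0)
      exact hW'.div (hS t ht0) (hSpos t ht0).ne'
    have hLto0 : Tendsto (fun u => W u / S u) atTop (𝓝 0) := by
      apply decay_aux _ _ t₀ δw hδw hLd key
      intro t ht
      obtain ⟨h1, h2, h3, h4, h5⟩ := hnonneg t (ht₀ t ht).2
      have : 0 ≤ W t := by simp only [hWdef]; linarith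
      exact div_nonneg this h1
    -- squeeze W
    apply tendsto_of_tendsto_of_tendsto_of_le_of_le' tendsto_const_nhds
      (show Tendsto (fun u => W u / S u * (Sss + εw)) atTop (𝓝 0) by
        simpa using hLto0.mul_const (Sss + εw))
    · filter_upwards [eventually_ge_atTop t₀] with t ht
      obtain ⟨h1, h2, h3, h4, h5⟩ := hnonneg t (ht₀ t ht).2
      simp only [hWdef]; linarith
    · filter_upwards [eventually_ge_atTop t₀] with t ht
      have ht0 : (0:ℝ) ≤ t := (ht₀ t ht).2
      have hSp := hSpos t ht0
      obtain ⟨h1, h2, h3, h4, h5⟩ := hnonneg t ht0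
      have hWnn : 0 ≤ W t := by simp only [hWdef]; linarith
      have hSle : S t ≤ Sss + εw := by
        have := (ht₀ t ht).1
        rw [hN t] at this
        linarith
      have hLnn : 0 ≤ W t / S t := div_nonneg hWnn hSp.le
      calc W t = W t / S t * S t := (div_mul_cancel₀ _ hSp.ne').symm
        _ ≤ W t / S t * (Sss + εw) := mul_le_mul_of_nonneg_left hSle hLnn
  have hI1to0 : Tendsto I1 atTop (𝓝 0) := by
    apply tendsto_of_tendsto_of_tendsto_of_le_of_le' tendsto_const_nhds hWto0
    · filter_upwards [eventually_ge_atTop (0:ℝ)] with t ht using (hnonneg t ht).2.1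
    · filter_upwards [eventually_ge_atTop (0:ℝ)] with t ht
      obtain ⟨h1, h2, h3, h4, h5⟩ := hnonneg t ht
      simp only [hWdef]; linarith
  have hI2to0 : Tendsto I2 atTop (𝓝 0) := by
    apply tendsto_of_tendsto_of_tendsto_of_le_of_le' tendsto_const_nhds hWto0
    · filter_upwards [eventually_ge_atTop (0:ℝ)] with t ht using (hnonneg t ht).2.2.1
    · filter_upwards [eventually_ge_atTop (0:ℝ)] with t ht
      obtain ⟨h1, h2, h3, h4, h5⟩ := hnonneg t ht
      simp only [hWdef]; linarith
  have hI12to0 : Tendsto I12 atTop (𝓝 0) := by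
    apply tendsto_of_tendsto_of_tendsto_of_le_of_le' tendsto_const_nhds hWto0
    · filter_upwards [eventually_ge_atTop (0:ℝ)] with t ht using (hnonneg t ht).2.2.2.1
    · filter_upwards [eventually_ge_atTop (0:ℝ)] with t ht
      obtain ⟨h1, h2, h3, h4, h5⟩ := hnonneg t ht
      simp only [hWdef]; linarith
  have hRto0 : Tendsto R atTop (𝓝 0) := by
    apply tendsto_of_tendsto_of_tendsto_of_le_of_le' tendsto_const_nhds hWto0
    · filter_upwards [eventually_ge_atTop (0:ℝ)] with t ht using (hnonneg t ht).2.2.2.2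
    · filter_upwards [eventually_ge_atTop (0:ℝ)] with t ht
      obtain ⟨h1, h2, h3, h4, h5⟩ := hnonneg t ht
      simp only [hWdef]; linarith
  have hSto : Tendsto S atTop (𝓝 Sss) := by
    refine Metric.tendsto_nhds.2 fun ε hε => ?_
    have hε2 : 0 < ε / 2 := by linarith
    have upper : ∀ᶠ t in atTop, S t ≤ Sss + ε / 2 := by
      filter_upwards [evN (ε / 2) hε2, eventually_ge_atTop (0:ℝ)] with t h1 ht0
      obtain ⟨k1, k2, k3, k4, k5⟩ := hnonneg t ht0
      have := hN t
      linarith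
    have lower : ∀ᶠ t in atTop, Sss - ε / 2 ≤ S t := by
      by_cases hcs : Sss ≤ ε / 2
      · filter_upwards [eventually_ge_atTop (0:ℝ)] with t ht0
        linarith [(hnonneg t ht0).1]
      · push_neg at hcs
        -- the perturbation term tends to 0
        have htd : Tendsto (fun t => b / K * (I1 t + I2 t + I12 t + R t)
            + (α1 * I1 t + α2 * I2 t + (β1 + β2 + α3) * I12 t)) atTop (𝓝 0) := by
          have h0 : Tendsto (fun t => I1 t + I2 t + I12 t + R t) atTop (𝓝 0) := by
            simpa using ((hI1to0.add hI2to0).add hI12to0).add hRto0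
          have hA : Tendsto (fun t => α1 * I1 t + α2 * I2 t + (β1 + β2 + α3) * I12 t)
              atTop (𝓝 0) := by
            simpa using ((hI1to0.const_mul α1).add (hI2to0.const_mul α2)).add
              (hI12to0.const_mul (β1 + β2 + α3))
          simpa using (h0.const_mul (b / K)).add hA
        have hη : 0 < b / (2 * K) * (ε / 2) := by positivity
        obtain ⟨t₁, ht₁⟩ := eventually_atTop.1
          ((htd.eventually_lt_const hη).and (eventually_ge_atTop (0:ℝ)))
        have hbar := barrier_up (fun t => Real.log (S t))
          (fun t => ((b * (1 - N t / K) - α1 * I1 t - α2 * I2 t - (β1 + β2 + α3) * I12 t - μ0)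
            * S t) / S t) t₁ (Real.log (Sss - ε / 2)) (b / (2 * K) * (ε / 2)) hη ?_ ?_
        · filter_upwards [hbar, eventually_ge_atTop (0:ℝ)] with t ht ht0
          have hlog : Real.log (Sss - ε / 2) ≤ Real.log (S t) := ht
          exact (Real.log_le_log_iff (by linarith) (hSpos t ht0)).1 hlog
        · intro t ht
          exact (hS t (ht₁ t ht).2).log (hSpos t (ht₁ t ht).2).ne'
        · intro t ht hlog
          have ht0 : (0:ℝ) ≤ t := (ht₁ t ht).2
          have hSp := hSpos t ht0
          have hSle : S t ≤ Sss - ε / 2 := by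
            have : Real.log (S t) ≤ Real.log (Sss - ε / 2) := hlog
            exact (Real.log_le_log_iff hSp (by linarith)).1 this
          have hq : (b * (1 - N t / K) - α1 * I1 t - α2 * I2 t - (β1 + β2 + α3) * I12 t - μ0)
              * S t / S t
              = b * (1 - N t / K) - α1 * I1 t - α2 * I2 t - (β1 + β2 + α3) * I12 t - μ0 :=
            mul_div_cancel_right₀ _ hSp.ne'
          show b / (2 * K) * (ε / 2)
            ≤ (b * (1 - N t / K) - α1 * I1 t - α2 * I2 t - (β1 + β2 + α3) * I12 t - μ0)
              * S t / S t
          rw [hq]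
          have hid : b * (1 - N t / K) - α1 * I1 t - α2 * I2 t - (β1 + β2 + α3) * I12 t - μ0
              = b / K * (Sss - S t) - (b / K * (I1 t + I2 t + I12 t + R t)
                + (α1 * I1 t + α2 * I2 t + (β1 + β2 + α3) * I12 t)) := by
            rw [hN t, hSss]
            field_simp
            ring
          rw [hid]
          have hm : b / K * (ε / 2) ≤ b / K * (Sss - S t) :=
            mul_le_mul_of_nonneg_left (by linarith) (by positivity)
          have hh : b / K * (I1 t + I2 t + I12 t + R t)
              + (α1 * I1 t + α2 * I2 t + (β1 + β2 + α3) * I12 t) < b / (2 * K) * (ε / 2) :=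
            (ht₁ t ht).1
          have hcoef : b / K * (ε / 2) = 2 * (b / (2 * K) * (ε / 2)) := by
            field_simp
          linarith only [hm, hh, hcoef]
    filter_upwards [upper, lower] with t h1 h2
    rw [Real.dist_eq, abs_sub_lt_iff]
    constructor <;> linarith
  exact ⟨hI1to0, hI2to0, hI12to0, hRto0, hSto⟩
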